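/- Every T-chain is either the single-entry chain [4], or a chain of the form [3, 2, …, 2, 3] (a 3, then k ≥ 0 entries equal to 2, then a 3), or is obtained from a T-chain of length one less by one of the two operations: (prepend an entry 2 and increase the last entry by 1) or (append an entry 2 and increase the first entry by 1). -/

import Mathlib

/-- Hirzebruch–Jung continued fraction of a list of integers:
`hjcf [] = 0` (junk value), `hjcf (b :: l) = b - 1 / hjcf l`.
Since `(0 : ℚ)⁻¹ = 0`, this gives `hjcf [b] = b`, matching the recursion
`[b_r] = b_r`, `[b_1, …, b_r] = b_1 − 1/[b_2, …, b_r]`. -/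
def hjcf : List ℤ → ℚ
  | [] => 0
  | b :: l => (b : ℚ) - (hjcf l)⁻¹

/-- `IsTChain l d n a` : the nonempty list `l` of integers, all ≥ 2, is a T-chain
with parameters `(d, n, a)`, i.e. its Hirzebruch–Jung continued fraction equals
`d n² / (d n a − 1)` where `d ≥ 1`, `n ≥ 2`, `0 < a < n`, `gcd(n, a) = 1`. -/
def IsTChain (l : List ℤ) (d n a : ℤ) : Prop :=
  l ≠ [] ∧ (∀ b ∈ l, 2 ≤ b) ∧
  1 ≤ d ∧ 2 ≤ n ∧ 0 < a ∧ a < n ∧ Int.gcd n a = 1 ∧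
  hjcf l = (d * n ^ 2 : ℚ) / (d * n * a - 1)

namespace TCAux

def tmat : List ℤ → ℤ × ℤ × ℤ × ℤ
  | [] => (1, 0, 0, 1)
  | x :: l => (x * (tmat l).1 - (tmat l).2.2.1, x * (tmat l).2.1 - (tmat l).2.2.2,
      (tmat l).1, (tmat l).2.1)

def nu (l : List ℤ) : ℤ := (tmat l).1
def bb (l : List ℤ) : ℤ := (tmat l).2.1
def de (l : List ℤ) : ℤ := (tmat l).2.2.1
def dd (l : List ℤ) : ℤ := (tmat l).2.2.2

@[simp] lemma nu_nil : nu [] = 1 := rfl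
@[simp] lemma bb_nil : bb [] = 0 := rfl
@[simp] lemma de_nil : de [] = 0 := rfl
@[simp] lemma dd_nil : dd [] = 1 := rfl
@[simp] lemma nu_cons (x : ℤ) (l : List ℤ) : nu (x :: l) = x * nu l - de l := rfl
@[simp] lemma bb_cons (x : ℤ) (l : List ℤ) : bb (x :: l) = x * bb l - dd l := rfl
@[simp] lemma de_cons (x : ℤ) (l : List ℤ) : de (x :: l) = nu l := rfl
@[simp] lemma dd_cons (x : ℤ) (l : List ℤ) : dd (x :: l) = bb l := rfl

lemma tdet (l : List ℤ) : nu l * dd l - bb l * de l = 1 := by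
  induction l with
  | nil => simp
  | cons x m ih => simp only [nu_cons, bb_cons, de_cons, dd_cons]; linear_combination ih

lemma tmat_append (l : List ℤ) (x : ℤ) :
    nu (l ++ [x]) = x * nu l + bb l ∧ bb (l ++ [x]) = -(nu l) ∧
    de (l ++ [x]) = x * de l + dd l ∧ dd (l ++ [x]) = -(de l) := by
  induction l with
  | nil => simp
  | cons y m ih =>
    obtain ⟨h1, h2, h3, h4⟩ := ih
    simp only [List.cons_append, nu_cons, bb_cons, de_cons, dd_cons, h1, h2, h3, h4]
    refine ⟨by ring, by ring, by trivial, by trivial⟩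

lemma tmat_reverse (l : List ℤ) :
    nu l.reverse = nu l ∧ bb l.reverse = -(de l) ∧ de l.reverse = -(bb l) ∧
    dd l.reverse = dd l := by
  induction l with
  | nil => simp
  | cons x m ih =>
    obtain ⟨h1, h2, h3, h4⟩ := ih
    obtain ⟨a1, a2, a3, a4⟩ := tmat_append m.reverse x
    rw [List.reverse_cons]
    simp only [a1, a2, a3, a4, h1, h2, h3, h4, nu_cons, bb_cons, de_cons, dd_cons]
    refine ⟨by ring, by trivial, by ring, by ring⟩

lemma tpos {l : List ℤ} (h : ∀ b ∈ l, 2 ≤ b) : 0 ≤ de l ∧ de l < nu l := by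
  induction l with
  | nil => simp
  | cons x m ih =>
    have hx : 2 ≤ x := h x (by simp)
    obtain ⟨h1, h2⟩ := ih (fun b hb => h b (by simp [hb]))
    simp only [nu_cons, de_cons]
    constructor
    · linarith
    · nlinarith

lemma hjcf_eq {l : List ℤ} (h : ∀ b ∈ l, 2 ≤ b) : hjcf l = (nu l : ℚ) / (de l : ℚ) := by
  induction l with
  | nil => simp [hjcf]
  | cons x m ih =>
    have hm : ∀ b ∈ m, 2 ≤ b := fun b hb => h b (by simp [hb])
    obtain ⟨h1, h2⟩ := tpos hm
    have hnu : (0:ℚ) < (nu m : ℚ) := by exact_mod_cast lt_of_le_of_lt h1 h2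
    rw [hjcf, ih hm, inv_div]
    simp only [nu_cons, de_cons]
    push_cast
    field_simp

lemma cop (d n a : ℤ) : IsCoprime (d * n ^ 2) (d * n * a - 1) :=
  ⟨-(d * a * (n - a) - 1), d * n * (n - a) - 1, by ring⟩

lemma nu_de_coprime (l : List ℤ) : IsCoprime (nu l) (de l) :=
  ⟨dd l, -(bb l), by linear_combination tdet l⟩

lemma nu_de_of_hjcf {l : List ℤ} (h : ∀ b ∈ l, 2 ≤ b) {p q : ℤ}
    (hcop : IsCoprime p q) (hq : 1 ≤ q) (hpq : q < p)
    (hv : hjcf l = (p : ℚ) / (q : ℚ)) : nu l = p ∧ de l = q := by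
  have hde : 1 ≤ de l := by
    rcases l with _ | ⟨x, m⟩
    · exfalso
      have h0 : hjcf ([] : List ℤ) = 0 := by
        rw [hjcf_eq (l := ([] : List ℤ)) (by simp), de_nil]; simp
      rw [h0] at hv
      have hq0 : (0:ℚ) < (q:ℚ) := by exact_mod_cast hq
      have hp0 : (0:ℚ) < (p:ℚ) := by exact_mod_cast lt_trans hq hpq
      have h2 := div_pos hp0 hq0
      rw [← hv] at h2; exact lt_irrefl 0 h2
    · rw [de_cons]
      have := tpos (l := m) (fun b hb => h b (by simp [hb]))
      omega
  have hnu : 1 ≤ nu l := by have := tpos h; omega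
  have hv2 : (nu l : ℚ) / (de l : ℚ) = (p : ℚ) / (q : ℚ) := by rw [← hjcf_eq h, hv]
  have hcross : nu l * q = p * de l := by
    have hde0 : ((de l : ℤ) : ℚ) ≠ 0 := by
      exact_mod_cast (by omega : (de l : ℤ) ≠ 0)
    have hq0 : ((q : ℤ) : ℚ) ≠ 0 := by exact_mod_cast (by omega : q ≠ 0)
    have := (div_eq_div_iff hde0 hq0).mp hv2
    exact_mod_cast this
  have h1 : nu l ∣ p := by
    exact (nu_de_coprime l).dvd_of_dvd_mul_right ⟨q, hcross.symm⟩
  have h2 : p ∣ nu l := by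
    exact hcop.dvd_of_dvd_mul_right ⟨de l, hcross⟩
  have hnp : nu l = p := Int.dvd_antisymm (by omega) (by omega) h1 h2
  refine ⟨hnp, ?_⟩
  have : nu l * q = nu l * de l := by rw [hnp] at hcross ⊢; linarith
  have := mul_left_cancel₀ (by omega : nu l ≠ 0) this
  omega

lemma inv_unique {p x y y' : ℤ} (h1 : p ∣ x * y - 1) (h2 : p ∣ x * y' - 1)
    (hy0 : 0 ≤ y) (hyp : y < p) (hy'0 : 0 ≤ y') (hy'p : y' < p) : y = y' := by
  obtain ⟨k, hk⟩ := h1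
  have hcx : IsCoprime p x := ⟨-k, y, by linear_combination hk⟩
  have h3 : p ∣ x * (y - y') := by
    obtain ⟨k', hk'⟩ := h2
    exact ⟨k - k', by linear_combination hk - hk'⟩
  obtain ⟨c, hc⟩ := hcx.dvd_of_dvd_mul_left h3
  have hc0 : c = 0 := by
    rcases lt_trichotomy c 0 with h | h | h
    · nlinarith
    · exact h
    · nlinarith
  rw [hc0] at hc; omega

lemma chain_eq : ∀ l l' : List ℤ, (∀ b ∈ l, 2 ≤ b) → (∀ b ∈ l', 2 ≤ b) →
    nu l = nu l' → de l = de l' → l = l' := by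
  intro l
  induction l with
  | nil =>
    intro l' _ h' hn _
    rcases l' with _ | ⟨x, m⟩
    · rfl
    · exfalso
      have hx : 2 ≤ x := h' x (by simp)
      have := tpos (l := m) (fun b hb => h' b (by simp [hb]))
      rw [nu_nil, nu_cons] at hn
      nlinarith
  | cons x m ih =>
    intro l' h h' hn hd
    rcases l' with _ | ⟨x', m'⟩
    · exfalso
      have hx : 2 ≤ x := h x (by simp)
      have := tpos (l := m) (fun b hb => h b (by simp [hb]))
      rw [nu_nil, nu_cons] at hn
      nlinarith
    · have hm : ∀ b ∈ m, 2 ≤ b := fun b hb => h b (by simp [hb])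
      have hm' : ∀ b ∈ m', 2 ≤ b := fun b hb => h' b (by simp [hb])
      have p1 := tpos hm
      have p2 := tpos hm'
      rw [de_cons, de_cons] at hd
      rw [nu_cons, nu_cons, ← hd] at hn
      have hx : x = x' := by
        rcases lt_trichotomy x x' with hlt | he | hgt
        · nlinarith
        · exact he
        · nlinarith
      rw [hx] at hn
      have hdm : de m = de m' := by
        have : x' * nu m - de m = x' * nu m - de m' := hn
        omega
      rw [ih m' hm hm' hd hdm, hx]

lemma exists_chain : ∀ (N : ℕ) (p q : ℤ), q ≤ (N : ℤ) → IsCoprime p q → 1 ≤ q → q < p →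
    ∃ l : List ℤ, (∀ b ∈ l, 2 ≤ b) ∧ nu l = p ∧ de l = q := by
  intro N
  induction N with
  | zero => intro p q hqN _ hq _; exfalso; exact_mod_cast lt_irrefl (0:ℤ) (by omega : (0:ℤ) < 0)
  | succ N ih =>
    intro p q hqN hcop hq hqp
    set b : ℤ := (p - 1) / q + 1 with hb
    have hdiv := Int.mul_ediv_add_emod (p - 1) q
    have hm1 : 0 ≤ (p - 1) % q := Int.emod_nonneg _ (by omega)
    have hm2 : (p - 1) % q < q := Int.emod_lt_of_pos _ (by omega)
    set q' : ℤ := b * q - p with hq'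
    have hq'e : q' = q - 1 - (p - 1) % q := by
      have e1 : q' = q * ((p - 1) / q) + q - p := by rw [hq', hb]; ring
      omega
    have hq'0 : 0 ≤ q' := by omega
    have hq'q : q' < q := by omega
    have hble : 2 ≤ b := by
      have : 1 ≤ (p - 1) / q := by
        rw [Int.le_ediv_iff_mul_le (by omega : (0:ℤ) < q)]; omega
      omega
    by_cases h0 : q' = 0
    · have hqdp : q ∣ p := ⟨b, by linear_combination -hq' - h0⟩
      have hq1 : q = 1 := by
        have hu := hcop.isUnit_of_dvd' hqdp dvd_rfl
        rcases Int.isUnit_iff.mp hu with h | h <;> omega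
      refine ⟨[p], ?_, by simp, by simp [hq1]⟩
      intro y hy
      simp only [List.mem_singleton] at hy
      omega
    · have hq'1 : 1 ≤ q' := by omega
      have hcop' : IsCoprime q q' := by
        have h1 : IsCoprime q (-p) := (hcop.symm).neg_right
        have h2 := h1.add_mul_left_right b
        have he : -p + q * b = q' := by rw [hq']; ring
        rwa [he] at h2
      obtain ⟨m, hmem, hnum, hden⟩ := ih q q' (by omega) hcop' hq'1 hq'q
      refine ⟨b :: m, ?_, ?_, ?_⟩
      · intro y hy
        rcases List.mem_cons.mp hy with h | h
        · omega
        · exact hmem y h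
      · rw [nu_cons, hnum, hden]; linear_combination -hq'
      · rw [de_cons, hnum]

/-- dual denominator: the reverse of `l` has denominator inverse mod `nu l`. -/
lemma de_reverse_dvd (l : List ℤ) : nu l ∣ de l.reverse * de l - 1 := by
  obtain ⟨h1, h2, h3, h4⟩ := tmat_reverse l
  exact ⟨-(dd l), by linear_combination de l * h3 + tdet l⟩

lemma gcd_one_of_coprime {n a : ℤ} (h : IsCoprime n a) : Int.gcd n a = 1 :=
  Int.isCoprime_iff_gcd_eq_one.mp h

/-- basic bounds for T-chain parameters -/
lemma param_bounds {d n a : ℤ} (hd : 1 ≤ d) (hn : 2 ≤ n) (ha : 0 < a) (han : a < n) :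
    1 ≤ d * n * a - 1 ∧ d * n * a - 1 < d * n ^ 2 := by
  have hdn : 2 ≤ d * n := by nlinarith [mul_le_mul_of_nonneg_right hd (by omega : (0:ℤ) ≤ n)]
  constructor
  · nlinarith [mul_le_mul_of_nonneg_left (by omega : (1:ℤ) ≤ a) (by linarith : (0:ℤ) ≤ d * n)]
  · nlinarith [mul_lt_mul_of_pos_left han (by linarith : (0:ℤ) < d * n)]

lemma isTChain_reverse {l : List ℤ} {d n a : ℤ} (h : IsTChain l d n a) :
    IsTChain l.reverse d n (n - a) := by
  obtain ⟨hne, hmem, hd, hn, ha0, han, hg, hv⟩ := h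
  have hcopna : IsCoprime n a := Int.isCoprime_iff_gcd_eq_one.mpr hg
  obtain ⟨hq1, hqp⟩ := param_bounds hd hn ha0 han
  have hvcast : hjcf l = ((d * n ^ 2 : ℤ) : ℚ) / ((d * n * a - 1 : ℤ) : ℚ) := by
    rw [hv]; push_cast; ring_nf
  obtain ⟨hnul, hdel⟩ := nu_de_of_hjcf hmem (cop d n a) hq1 hqp hvcast
  have hmemr : ∀ b ∈ l.reverse, 2 ≤ b := fun b hb => hmem b (List.mem_reverse.mp hb)
  obtain ⟨hr1, hr2, hr3, hr4⟩ := tmat_reverse l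
  have hposr := tpos hmemr
  -- de l.reverse = d*n*(n-a) - 1
  obtain ⟨hqbar1, hqbar2⟩ := param_bounds (a := n - a) hd hn (by omega) (by omega)
  have hder : de l.reverse = d * n * (n - a) - 1 := by
    refine inv_unique (p := d * n ^ 2) (x := d * n * a - 1) ?_ ?_ ?_ ?_ ?_ ?_
    · have := de_reverse_dvd l
      rw [hnul, hdel] at this
      obtain ⟨k, hk⟩ := this
      exact ⟨k, by linear_combination hk⟩
    · exact ⟨d * a * (n - a) - 1, by ring⟩
    · exact hposr.1
    · rw [← hnul, ← hr1]; exact hposr.2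
    · linarith
    · exact hqbar2
  refine ⟨by simpa using hne, hmemr, hd, hn, by omega, by omega, ?_, ?_⟩
  · refine gcd_one_of_coprime ?_
    have h2 := (hcopna.neg_right).add_mul_left_right 1
    have he : -a + n * 1 = n - a := by ring
    rwa [he] at h2
  · rw [hjcf_eq hmemr, hr1, hnul, hder]
    push_cast; ring_nf

lemma helperD {d n a : ℤ} (hd : 1 ≤ d) (hn : 3 ≤ n) (ha : 0 < a) (han : a < n)
    (h2a : n < 2 * a) (hcop : IsCoprime n a) :
    ∃ (bs : List ℤ) (c : ℤ), IsTChain (bs ++ [c]) d a (2 * a - n) ∧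
      (∀ b ∈ (2 :: (bs ++ [c + 1]) : List ℤ), 2 ≤ b) ∧
      nu (2 :: (bs ++ [c + 1])) = d * n ^ 2 ∧
      de (2 :: (bs ++ [c + 1])) = d * n * a - 1 := by
  have ha2 : 2 ≤ a := by omega
  have hcopa : IsCoprime a (n - a) := by
    have h2 := (hcop.symm).add_mul_left_right (-1)
    have he : n + a * (-1) = n - a := by ring
    rwa [he] at h2
  obtain ⟨hq1, hq2⟩ := param_bounds (a := n - a) hd ha2 (by omega) (by omega)
  obtain ⟨u, hmemu, hnuu, hdeu⟩ := exists_chain (d * a * (n - a) - 1).toNat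
    (d * a ^ 2) (d * a * (n - a) - 1) (Int.self_le_toNat _) (cop d a (n - a)) hq1 hq2
  rcases u with _ | ⟨c, t⟩
  · exfalso; rw [nu_nil] at hnuu; nlinarith
  have hc : 2 ≤ c := hmemu c (by simp)
  have hmemt : ∀ b ∈ t, 2 ≤ b := fun b hb => hmemu b (by simp [hb])
  have hT : IsTChain (c :: t) d a (n - a) := by
    refine ⟨by simp, hmemu, hd, ha2, by omega, by omega, gcd_one_of_coprime hcopa, ?_⟩
    rw [hjcf_eq hmemu, hnuu, hdeu]; push_cast; ring_nf
  have hTrev := isTChain_reverse hT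
  rw [List.reverse_cons, show a - (n - a) = 2 * a - n by ring] at hTrev
  -- the new chain
  have hnut : nu t = d * a * (n - a) - 1 := by rw [← hdeu, de_cons]
  set v : List ℤ := (c + 1) :: t with hv
  have hmemv : ∀ b ∈ v, 2 ≤ b := by
    intro b hb; rcases List.mem_cons.mp hb with h | h
    · omega
    · exact hmemt b h
  have hmemrv : ∀ b ∈ v.reverse, 2 ≤ b := fun b hb => hmemv b (List.mem_reverse.mp hb)
  have hqid : d * a ^ 2 + (d * a * (n - a) - 1) = d * n * a - 1 := by ring
  have hnuv : nu v = d * n * a - 1 := by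
    rw [hv, nu_cons]
    have : nu (c :: t) = d * a ^ 2 := hnuu
    rw [nu_cons] at this
    linarith [hnut]
  have hdev : de v = d * a * (n - a) - 1 := by rw [hv, de_cons, hnut]
  obtain ⟨hrv1, hrv2, hrv3, hrv4⟩ := tmat_reverse v
  have hposrv := tpos hmemrv
  obtain ⟨hqq1, hqq2⟩ := param_bounds hd (by omega : 2 ≤ n) ha han
  have hdn3 : 3 ≤ d * n := by nlinarith [mul_le_mul_of_nonneg_right hd (by omega : (0:ℤ) ≤ n)]
  have hy'0 : 0 ≤ d * n * (2 * a - n) - 2 := by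
    nlinarith [mul_le_mul_of_nonneg_left (by omega : (1:ℤ) ≤ 2 * a - n) (by linarith : (0:ℤ) ≤ d * n)]
  have hy'p : d * n * (2 * a - n) - 2 < d * n * a - 1 := by
    nlinarith [mul_le_mul_of_nonneg_left (by omega : (2 * a - n : ℤ) ≤ a - 1) (by linarith : (0:ℤ) ≤ d * n)]
  have hderv : de v.reverse = d * n * (2 * a - n) - 2 := by
    refine inv_unique (p := d * n * a - 1) (x := d * a * (n - a) - 1) ?_ ?_ ?_ ?_ hy'0 hy'p
    · obtain ⟨k, hk⟩ := de_reverse_dvd v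
      rw [hnuv, hdev] at hk
      exact ⟨k, by linear_combination hk⟩
    · exact ⟨d * (2 * a - n) * (n - a) - 1, by ring⟩
    · exact hposrv.1
    · rw [← hnuv, ← hrv1]; exact hposrv.2
  have hrvlist : v.reverse = t.reverse ++ [c + 1] := by rw [hv, List.reverse_cons]
  refine ⟨t.reverse, c, hTrev, ?_, ?_, ?_⟩
  · intro b hb
    rcases List.mem_cons.mp hb with h | h
    · omega
    · rw [← hrvlist] at h; exact hmemrv b h
  · rw [← hrvlist, nu_cons, hrv1, hnuv, hderv]; ring
  · rw [← hrvlist, de_cons, hrv1, hnuv]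

lemma rep_chain (k : ℕ) : nu (List.replicate k 2 ++ [3]) = 2 * (k : ℤ) + 3 ∧
    de (List.replicate k 2 ++ [3]) = 2 * (k : ℤ) + 1 := by
  induction k with
  | zero => simp
  | succ k ih =>
    obtain ⟨h1, h2⟩ := ih
    rw [List.replicate_succ, List.cons_append, nu_cons, de_cons, h1, h2]
    push_cast; constructor <;> ring

end TCAux

open TCAux in
/-- Every T-chain is [4], or [3, 2^k, 3], or is obtained from a
T-chain of length one less by prepending a 2 and increasing the last entry by 1,
or by appending a 2 and increasing the first entry by 1. -/
theorem tchain_structure (l : List ℤ) (d n a : ℤ) (h : IsTChain l d n a) :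
    l = [4] ∨
    (∃ k : ℕ, l = 3 :: (List.replicate k 2 ++ [3])) ∨
    (∃ (bs : List ℤ) (c d' n' a' : ℤ), IsTChain (bs ++ [c]) d' n' a' ∧
      l = 2 :: (bs ++ [c + 1])) ∨
    (∃ (b : ℤ) (bs : List ℤ) (d' n' a' : ℤ), IsTChain (b :: bs) d' n' a' ∧
      l = (b + 1) :: (bs ++ [2])) := by
  obtain ⟨hne, hmem, hd, hn, ha0, han, hg, hv⟩ := h
  have hcopna : IsCoprime n a := Int.isCoprime_iff_gcd_eq_one.mpr hg
  obtain ⟨hq1, hqp⟩ := param_bounds hd hn ha0 han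
  have hvcast : hjcf l = ((d * n ^ 2 : ℤ) : ℚ) / ((d * n * a - 1 : ℤ) : ℚ) := by
    rw [hv]; push_cast; ring_nf
  obtain ⟨hnul, hdel⟩ := nu_de_of_hjcf hmem (cop d n a) hq1 hqp hvcast
  have hdn2 : 2 ≤ d * n := by
    nlinarith [mul_le_mul_of_nonneg_right hd (by omega : (0:ℤ) ≤ n)]
  rcases l with _ | ⟨x, m⟩
  · exact absurd rfl hne
  rcases m with _ | ⟨y, r⟩
  · -- single entry
    have hde1 : de [x] = 1 := by rw [de_cons, nu_nil]
    have hdna : d * n * a = 2 := by rw [hde1] at hdel; omega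
    have h1 : d * n ≤ 2 := by
      nlinarith [mul_le_mul_of_nonneg_left (by omega : (1:ℤ) ≤ a) (by linarith : (0:ℤ) ≤ d * n)]
    have hd1 : d = 1 := by nlinarith
    have hn2 : n = 2 := by rw [hd1] at h1; linarith
    have ha1 : a = 1 := by rw [hd1, hn2] at hdna; linarith
    have hx : x = 4 := by
      have : nu [x] = x := by rw [nu_cons, nu_nil, de_nil]; ring
      rw [this, hd1, hn2] at hnul; linarith [hnul]
    left; rw [hx]
  · -- length ≥ 2
    have hmemm : ∀ b ∈ y :: r, 2 ≤ b := fun b hb => hmem b (by simp [hb])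
    have hmemr' : ∀ b ∈ r, 2 ≤ b := fun b hb => hmem b (by simp [hb])
    have hde2 : 2 ≤ de (x :: y :: r) := by
      have h1 := tpos hmemm
      have h2 := tpos hmemr'
      rw [de_cons]; rw [de_cons] at h1; omega
    by_cases hn2 : n = 2
    · -- chain [3,2^k,3]
      have ha1 : a = 1 := by omega
      have hd2 : 2 ≤ d := by
        rw [hdel, hn2, ha1] at hde2
        nlinarith
      set k : ℕ := (d - 2).toNat with hk
      have hkd : (k : ℤ) = d - 2 := by rw [hk]; omega
      obtain ⟨hr1, hr2⟩ := rep_chain k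
      have hmemc : ∀ b ∈ (3 :: (List.replicate k 2 ++ [3]) : List ℤ), 2 ≤ b := by
        intro b hb
        simp at hb
        rcases hb with h | h | h <;> omega
      have hl : (x :: y :: r : List ℤ) = 3 :: (List.replicate k 2 ++ [3]) := by
        refine chain_eq _ _ hmem hmemc ?_ ?_
        · rw [hnul, nu_cons, hr1, hr2, hkd, hn2]; ring
        · rw [hdel, de_cons, hr1, hkd, hn2, ha1]; ring
      right; left; exact ⟨k, hl⟩
    · have hn3 : 3 ≤ n := by omega
      have h2an : 2 * a ≠ n := by
        intro heq
        have hdvd : a ∣ n := ⟨2, by omega⟩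
        have := Int.dvd_coe_gcd hdvd dvd_rfl
        rw [hg] at this
        have := Int.le_of_dvd one_pos this
        omega
      rcases lt_or_gt_of_ne h2an with hlt | hgt
      · -- 2a < n : appended case, use reversal
        have hrev : IsTChain (x :: y :: r).reverse d n (n - a) :=
          isTChain_reverse ⟨hne, hmem, hd, hn, ha0, han, hg, hv⟩
        have hcopna' : IsCoprime n (n - a) := by
          have h2 := (hcopna.neg_right).add_mul_left_right 1
          have he : -a + n * 1 = n - a := by ring
          rwa [he] at h2
        obtain ⟨bs, c, hT, hmemL, hnuL, hdeL⟩ :=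
          helperD (a := n - a) hd hn3 (by omega) (by omega) (by omega) hcopna'
        obtain ⟨_, hmemrev, _, _, _, _, _, hvr⟩ := hrev
        obtain ⟨hqb1, hqb2⟩ := param_bounds (a := n - a) hd hn (by omega) (by omega)
        have hvrcast : hjcf (x :: y :: r).reverse =
            ((d * n ^ 2 : ℤ) : ℚ) / ((d * n * (n - a) - 1 : ℤ) : ℚ) := by
          rw [hvr]; push_cast; ring_nf
        obtain ⟨hnurev, hderev⟩ := nu_de_of_hjcf hmemrev (cop d n (n - a)) hqb1 hqb2 hvrcast
        have hlrev : (x :: y :: r).reverse = 2 :: (bs ++ [c + 1]) := by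
          refine chain_eq _ _ hmemrev hmemL ?_ ?_
          · rw [hnurev, hnuL]
          · rw [hderev, hdeL]
        have hl : (x :: y :: r : List ℤ) = (c + 1) :: (bs.reverse ++ [2]) := by
          have := congrArg List.reverse hlrev
          simpa using this
        right; right; right
        refine ⟨c, bs.reverse, d, n - a, a, ?_, hl⟩
        have hTrev := isTChain_reverse hT
        rw [show (n - a) - (2 * (n - a) - n) = a by ring] at hTrev
        have : (bs ++ [c]).reverse = c :: bs.reverse := by simp
        rwa [this] at hTrev
      · -- 2a > n : prepended case
        obtain ⟨bs, c, hT, hmemL, hnuL, hdeL⟩ := helperD hd hn3 ha0 han (by omega) hcopna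
        have hl : (x :: y :: r : List ℤ) = 2 :: (bs ++ [c + 1]) := by
          refine chain_eq _ _ hmem hmemL ?_ ?_
          · rw [hnul, hnuL]
          · rw [hdel, hdeL]
        right; right; left
        exact ⟨bs, c, d, a, 2 * a - n, hT, hl⟩
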